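/- The set of matrices of the form exp(d_{α,β}) (upper triangular with diagonal entries e^{2^{i-1}α} and last column as in the exponential formula) is closed under matrix multiplication: for any α₁, β₁, α₂, β₂ ∈ ℝ there exist α, β ∈ ℝ with exp(d_{α₁,β₁})·exp(d_{α₂,β₂}) = exp(d_{α,β}), where α = α₁ + α₂. -/

import Mathlib

open Matrix

/-- The derivation matrix `d_{α,β}`: dimension `n+1`, 0-based indices, diagonal
`(α, 2α, …, 2^n α)`, last column `(β, (2-2^n)α a_1, …, (2^{n-1}-2^n)α a_{n-1}, 2^n α)`,
zeros elsewhere. -/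
def derMat (n : ℕ) (a : Fin (n+1) → ℝ) (α β : ℝ) : Matrix (Fin (n+1)) (Fin (n+1)) ℝ :=
  Matrix.of fun i j : Fin (n+1) =>
    if i = j then (2 : ℝ) ^ (i : ℕ) * α
    else if j = Fin.last n then
      (if i = 0 then β else ((2 : ℝ) ^ (i : ℕ) - 2 ^ n) * α * a i)
    else 0

namespace DerMatAux

variable {n : ℕ} (a : Fin (n+1) → ℝ)

def Emat (n : ℕ) : Matrix (Fin (n+1)) (Fin (n+1)) ℝ :=
  Matrix.of fun i j : Fin (n+1) => if i = 0 ∧ j = Fin.last n then 1 else 0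

lemma zero_ne_last (hn : n ≠ 0) : (0 : Fin (n+1)) ≠ Fin.last n := by
  simp [Fin.ext_iff, Fin.last, hn, Ne.symm hn]

lemma derMat_decomp (hn : n ≠ 0) (α β : ℝ) :
    derMat n a α β = α • derMat n a 1 0 + β • Emat n := by
  have h0 := zero_ne_last hn
  ext i j
  simp only [derMat, Emat, Matrix.of_apply, Matrix.add_apply, Matrix.smul_apply, smul_eq_mul]
  by_cases hij : i = j <;> by_cases hjl : j = Fin.last n <;> by_cases hi0 : i = 0 <;>
    simp_all <;> ring

lemma Cmat_mul_Emat (hn : n ≠ 0) : derMat n a 1 0 * Emat n = Emat n := by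
  have h0 := zero_ne_last hn
  ext i j
  rw [Matrix.mul_apply]
  rw [Finset.sum_eq_single (0 : Fin (n+1))]
  · by_cases hi0 : i = 0 <;> simp_all [derMat, Emat]
  · intro k _ hk; simp [Emat, hk]
  · simp

lemma Emat_mul_Cmat (hn : n ≠ 0) :
    Emat n * derMat n a 1 0 = ((2:ℝ)^n) • Emat n := by
  have h0 := zero_ne_last hn
  ext i j
  rw [Matrix.smul_apply, Matrix.mul_apply]
  rw [Finset.sum_eq_single (Fin.last n)]
  · by_cases hi0 : i = 0 <;> by_cases hjl : j = Fin.last n <;>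
      simp_all [derMat, Emat, Ne.symm h0, eq_comm]
  · intro k _ hk; simp [Emat, hk]
  · simp

lemma Emat_mul_Emat (hn : n ≠ 0) : Emat n * Emat n = 0 := by
  have h0 := zero_ne_last hn
  ext i j
  rw [Matrix.mul_apply]
  apply Finset.sum_eq_zero
  intro k _
  by_cases hk : k = Fin.last n <;> simp [Emat, hk, Ne.symm h0]

lemma Cmat_pow_mul_Emat (hn : n ≠ 0) (k : ℕ) :
    derMat n a 1 0 ^ k * Emat n = Emat n := by
  induction k with
  | zero => simp
  | succ k ih => rw [pow_succ, mul_assoc, Cmat_mul_Emat a hn, ih]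

lemma Emat_mul_Cmat_pow (hn : n ≠ 0) (k : ℕ) :
    Emat n * derMat n a 1 0 ^ k = (((2:ℝ)^n)^k) • Emat n := by
  induction k with
  | zero => simp
  | succ k ih =>
      rw [pow_succ, ← mul_assoc, ih, smul_mul_assoc, Emat_mul_Cmat a hn, smul_smul, pow_succ]

lemma exp_apply (A : Matrix (Fin (n+1)) (Fin (n+1)) ℝ) :
    NormedSpace.exp A = ∑' k : ℕ, ((Nat.factorial k : ℝ)⁻¹) • A ^ k :=
  congrFun (NormedSpace.exp_eq_tsum ℝ) A

lemma real_exp_tsum (α : ℝ) :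
    Real.exp α = ∑' k : ℕ, (Nat.factorial k : ℝ)⁻¹ * α ^ k := by
  rw [Real.exp_eq_exp_ℝ,
    show NormedSpace.exp α = ∑' k : ℕ, ((Nat.factorial k : ℝ)⁻¹) • α ^ k from
      congrFun (NormedSpace.exp_eq_tsum ℝ) α]
  simp [smul_eq_mul]

lemma exp_mul_Emat (hn : n ≠ 0) (α : ℝ) :
    NormedSpace.exp (α • derMat n a 1 0) * Emat n = Real.exp α • Emat n := by
  have hsum : Summable (fun k : ℕ => ((Nat.factorial k : ℝ)⁻¹) • (α • derMat n a 1 0) ^ k) := by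
    letI : SeminormedRing (Matrix (Fin (n+1)) (Fin (n+1)) ℝ) := Matrix.linftyOpSemiNormedRing
    letI : NormedRing (Matrix (Fin (n+1)) (Fin (n+1)) ℝ) := Matrix.linftyOpNormedRing
    letI : NormedAlgebra ℝ (Matrix (Fin (n+1)) (Fin (n+1)) ℝ) := Matrix.linftyOpNormedAlgebra
    exact NormedSpace.expSeries_summable' (𝕂 := ℝ) _
  rw [exp_apply, ← hsum.tsum_mul_right]
  have h1 : ∀ k : ℕ, ((Nat.factorial k : ℝ)⁻¹ • (α • derMat n a 1 0) ^ k) * Emat n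
      = ((Nat.factorial k : ℝ)⁻¹ * α ^ k) • Emat n := by
    intro k
    rw [smul_pow, smul_mul_assoc, smul_mul_assoc, Cmat_pow_mul_Emat a hn, smul_smul]
  simp_rw [h1]
  have hs : Summable fun k : ℕ => ((Nat.factorial k : ℝ)⁻¹ * α ^ k) := by
    simpa [div_eq_mul_inv, mul_comm] using Real.summable_pow_div_factorial α
  rw [hs.tsum_smul_const, real_exp_tsum]

lemma Emat_mul_exp (hn : n ≠ 0) (α : ℝ) :
    Emat n * NormedSpace.exp (α • derMat n a 1 0)
      = Real.exp ((2:ℝ)^n * α) • Emat n := by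
  have hsum : Summable (fun k : ℕ => ((Nat.factorial k : ℝ)⁻¹) • (α • derMat n a 1 0) ^ k) := by
    letI : SeminormedRing (Matrix (Fin (n+1)) (Fin (n+1)) ℝ) := Matrix.linftyOpSemiNormedRing
    letI : NormedRing (Matrix (Fin (n+1)) (Fin (n+1)) ℝ) := Matrix.linftyOpNormedRing
    letI : NormedAlgebra ℝ (Matrix (Fin (n+1)) (Fin (n+1)) ℝ) := Matrix.linftyOpNormedAlgebra
    exact NormedSpace.expSeries_summable' (𝕂 := ℝ) _
  rw [exp_apply, ← hsum.tsum_mul_left]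
  have h1 : ∀ k : ℕ, Emat n * ((Nat.factorial k : ℝ)⁻¹ • (α • derMat n a 1 0) ^ k)
      = ((Nat.factorial k : ℝ)⁻¹ * ((2:ℝ)^n * α) ^ k) • Emat n := by
    intro k
    rw [smul_pow, mul_smul_comm, mul_smul_comm, Emat_mul_Cmat_pow a hn, smul_smul, smul_smul,
      mul_pow]
    ring_nf
  simp_rw [h1]
  have hs : Summable fun k : ℕ => ((Nat.factorial k : ℝ)⁻¹ * ((2:ℝ)^n * α) ^ k) := by
    simpa [div_eq_mul_inv, mul_comm] using Real.summable_pow_div_factorial ((2:ℝ)^n * α)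
  rw [hs.tsum_smul_const, real_exp_tsum]

lemma exp_smul_Emat (hn : n ≠ 0) (β : ℝ) :
    NormedSpace.exp (β • Emat n) = 1 + β • Emat n := by
  rw [exp_apply]
  have hEE := Emat_mul_Emat (n := n) hn
  have hz : ∀ k : ℕ, k ∉ ({0, 1} : Finset ℕ) →
      ((Nat.factorial k : ℝ)⁻¹ • (β • Emat n) ^ k) = 0 := by
    intro k hk
    have h2 : 2 ≤ k := by
      simp only [Finset.mem_insert, Finset.mem_singleton] at hk; omega
    obtain ⟨m, rfl⟩ : ∃ m, k = m + 2 := ⟨k - 2, by omega⟩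
    have : (β • Emat n) ^ (m + 2) = 0 := by
      simp [pow_add, pow_two, smul_mul_assoc, mul_smul_comm, hEE]
    rw [this, smul_zero]
  rw [tsum_eq_sum hz]
  simp [Finset.sum_pair (show (0:ℕ) ≠ 1 by norm_num)]

noncomputable def gfun (n : ℕ) (α : ℝ) : ℝ :=
  if α = 0 then 1
  else (Real.exp ((2:ℝ)^n * α) - Real.exp α) / (((2:ℝ)^n - 1) * α)

lemma two_pow_sub_one_ne (hn : n ≠ 0) : ((2:ℝ)^n - 1) ≠ 0 := by
  have h : (2:ℝ)^0 < 2^n := pow_lt_pow_right₀ (by norm_num) (by omega)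
  simp only [pow_zero] at h
  linarith

lemma gfun_ne_zero (hn : n ≠ 0) (α : ℝ) : gfun n α ≠ 0 := by
  unfold gfun
  split_ifs with h
  · norm_num
  · have hne : (2:ℝ)^n * α ≠ α := by
      intro hc
      have : ((2:ℝ)^n - 1) * α = 0 := by linarith
      rcases mul_eq_zero.mp this with h1 | h1
      · exact two_pow_sub_one_ne hn h1
      · exact h h1
    have hnum : Real.exp ((2:ℝ)^n * α) - Real.exp α ≠ 0 := by
      intro hc
      exact hne (Real.exp_injective (by linarith))
    exact div_ne_zero hnum (mul_ne_zero (two_pow_sub_one_ne hn) h)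

lemma key (hn : n ≠ 0) (α β : ℝ) :
    NormedSpace.exp (derMat n a α β)
      = NormedSpace.exp (α • derMat n a 1 0) + (β * gfun n α) • Emat n := by
  by_cases hα : α = 0
  · subst hα
    rw [derMat_decomp a hn]
    simp only [zero_smul, zero_add]
    rw [exp_smul_Emat hn, NormedSpace.exp_zero]
    simp [gfun]
  · set S := Emat n
    set Cm := derMat n a 1 0
    set t : ℝ := β / (((2:ℝ)^n - 1) * α) with ht
    have hEE : S * S = 0 := Emat_mul_Emat hn
    have hCE : Cm * S = S := Cmat_mul_Emat a hn
    have hEC : S * Cm = ((2:ℝ)^n) • S := Emat_mul_Cmat a hn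
    have hden : ((2:ℝ)^n - 1) * α ≠ 0 := mul_ne_zero (two_pow_sub_one_ne hn) hα
    have hUval : (1 + t • S) * (1 - t • S) = 1 := by
      rw [mul_sub, mul_one, add_mul, one_mul, smul_mul_assoc, mul_smul_comm, hEE]
      simp only [smul_zero, smul_zero]
      abel
    have hUval' : (1 - t • S) * (1 + t • S) = 1 := by
      rw [sub_mul, one_mul, mul_add, mul_one, smul_mul_assoc, mul_smul_comm, hEE]
      simp only [smul_zero, smul_zero]
      abel
    set U : (Matrix (Fin (n+1)) (Fin (n+1)) ℝ)ˣ :=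
      ⟨1 + t • S, 1 - t • S, hUval, hUval'⟩ with hU
    have hβ : β = t * α * ((2:ℝ)^n - 1) := by
      rw [ht, div_mul_eq_mul_div, div_mul_eq_mul_div, eq_div_iff hden]; ring
    have hconj : derMat n a α β = (U : Matrix (Fin (n+1)) (Fin (n+1)) ℝ) * (α • Cm) * ((U⁻¹ : (Matrix (Fin (n+1)) (Fin (n+1)) ℝ)ˣ) : Matrix (Fin (n+1)) (Fin (n+1)) ℝ) := by
      show derMat n a α β = (1 + t • S) * (α • Cm) * (1 - t • S)
      rw [derMat_decomp a hn]
      simp only [mul_sub, sub_mul, mul_add, add_mul, one_mul, mul_one,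
        smul_mul_assoc, mul_smul_comm, hEE, hCE, hEC, smul_smul, smul_zero]
      rw [hβ]
      module
    rw [hconj, Matrix.exp_units_conj]
    show (1 + t • S) * NormedSpace.exp (α • Cm) * (1 - t • S) = _
    have hXE : NormedSpace.exp (α • Cm) * S = Real.exp α • S := exp_mul_Emat a hn α
    have hSX : S * NormedSpace.exp (α • Cm) = Real.exp ((2:ℝ)^n * α) • S :=
      Emat_mul_exp a hn α
    have hg : β * gfun n α = t * (Real.exp ((2:ℝ)^n * α) - Real.exp α) := by
      rw [ht]
      unfold gfun
      rw [if_neg hα]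
      field_simp
    simp only [mul_sub, sub_mul, mul_add, add_mul, one_mul, mul_one,
      smul_mul_assoc, mul_smul_comm, hXE, hSX, hEE, smul_smul, smul_zero]
    rw [hg]
    module

end DerMatAux

open DerMatAux in
/-- the set `{exp (d_{α,β})}` is closed under matrix multiplication;
for the product one may take `α = α₁ + α₂`. -/
theorem exp_der_closed_under_mul {n : ℕ} (hn : 2 ≤ n) (a : Fin (n+1) → ℝ) :
    ∀ α₁ β₁ α₂ β₂ : ℝ, ∃ β : ℝ,
      NormedSpace.exp (derMat n a α₁ β₁) * NormedSpace.exp (derMat n a α₂ β₂)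
        = NormedSpace.exp (derMat n a (α₁ + α₂) β) := by
  intro α₁ β₁ α₂ β₂
  have hn0 : n ≠ 0 := by omega
  set S := Emat n
  set Cm := derMat n a 1 0
  set s₁ : ℝ := β₁ * gfun n α₁
  set s₂ : ℝ := β₂ * gfun n α₂
  refine ⟨(s₂ * Real.exp α₁ + s₁ * Real.exp ((2:ℝ)^n * α₂)) / gfun n (α₁ + α₂), ?_⟩
  rw [key a hn0, key a hn0, key a hn0]
  have hEE : S * S = 0 := Emat_mul_Emat hn0
  have hX₁E : NormedSpace.exp (α₁ • Cm) * S = Real.exp α₁ • S := exp_mul_Emat a hn0 α₁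
  have hSX₂ : S * NormedSpace.exp (α₂ • Cm) = Real.exp ((2:ℝ)^n * α₂) • S :=
    Emat_mul_exp a hn0 α₂
  have hcomm : Commute (α₁ • Cm) (α₂ • Cm) :=
    ((Commute.refl Cm).smul_left α₁).smul_right α₂
  have hXX : NormedSpace.exp (α₁ • Cm) * NormedSpace.exp (α₂ • Cm)
      = NormedSpace.exp ((α₁ + α₂) • Cm) := by
    rw [← Matrix.exp_add_of_commute _ _ hcomm, add_smul]
  have hβg : (s₂ * Real.exp α₁ + s₁ * Real.exp ((2:ℝ)^n * α₂)) / gfun n (α₁ + α₂)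
      * gfun n (α₁ + α₂) = s₂ * Real.exp α₁ + s₁ * Real.exp ((2:ℝ)^n * α₂) :=
    div_mul_cancel₀ _ (gfun_ne_zero hn0 (α₁ + α₂))
  rw [hβg]
  simp only [S, Cm, s₁, s₂] at hEE hX₁E hSX₂ hXX ⊢
  simp only [mul_add, add_mul, smul_mul_assoc, mul_smul_comm, hX₁E, hSX₂, hEE,
    smul_smul, smul_zero, hXX]
  module
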